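/- Let a, b, c be real numbers with c ≠ 0. For every 3×3 matrix P of real polynomials, (P·D₂)·D₁ = (P·D₂)·D₂ + (2(c²+2)/c²)·((P·D₁) - (P·D₂)) as matrices of polynomials; that is, the operators satisfy the relation D₂D₁ = D₂² + (2(c²+2)/c²)(D₁ - D₂). -/
import Mathlib


open Matrix Polynomial

/-- First-order (polynomial) coefficient of the operator D₁. -/
noncomputable def F1p (a b c : ℝ) : Matrix (Fin 3) (Fin 3) (Polynomial ℝ) :=
  !![C (2 * b) - 2 * X, C (-2 * a * b) * X + C (2 * a), 0;
     0, -2 * X, 0;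
     0, C (2 * c), -2 * X]

/-- Zeroth-order coefficient of the operator D₁. -/
noncomputable def F0p : Matrix (Fin 3) (Fin 3) (Polynomial ℝ) :=
  !![0, 0, 0; 0, 2, 0; 0, 0, 0]

/-- Second-order (polynomial) coefficient of the operator D₂. -/
noncomputable def G2p (a c : ℝ) : Matrix (Fin 3) (Fin 3) (Polynomial ℝ) :=
  !![0, C a * X, 0; 0, 1, 0; 0, C c * X, 0]

/-- First-order (polynomial) coefficient of the operator D₂. -/
noncomputable def G1p (a c : ℝ) : Matrix (Fin 3) (Fin 3) (Polynomial ℝ) :=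
  !![0, C (2 * a), C (-2 * a / c) * X;
     0, 0, C (-2 / c);
     0, C (2 * c + 2 / c), -2 * X]

/-- Zeroth-order coefficient of the operator D₂. -/
noncomputable def G0p (a c : ℝ) : Matrix (Fin 3) (Fin 3) (Polynomial ℝ) :=
  !![C (2 + 4 / c ^ 2), 0, C (-2 * a / c);
     0, C (2 + 4 / c ^ 2), 0;
     0, 0, 0]

/-- The right action of D₁ on a matrix polynomial: P·D₁ = P'' + P'·F₁ + P·F₀. -/
noncomputable def rightD1 (a b c : ℝ) (P : Matrix (Fin 3) (Fin 3) (Polynomial ℝ)) :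
    Matrix (Fin 3) (Fin 3) (Polynomial ℝ) :=
  P.map (fun p => derivative (derivative p))
    + P.map (fun p => derivative p) * F1p a b c + P * F0p

/-- The right action of D₂ on a matrix polynomial: P·D₂ = P''·G₂ + P'·G₁ + P·G₀. -/
noncomputable def rightD2 (a c : ℝ) (P : Matrix (Fin 3) (Fin 3) (Polynomial ℝ)) :
    Matrix (Fin 3) (Fin 3) (Polynomial ℝ) :=
  P.map (fun p => derivative (derivative p)) * G2p a c
    + P.map (fun p => derivative p) * G1p a c + P * G0p a c

private lemma fin3_mk_two (h : 2 < 3) : (⟨2, h⟩ : Fin 3) = 2 := rfl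

set_option maxHeartbeats 4000000 in
/-- the relation D₂D₁ = D₂² + (2(c²+2)/c²)(D₁ - D₂):
(P·D₂)·D₁ = (P·D₂)·D₂ + (2(c²+2)/c²)·((P·D₁) - (P·D₂)) for every matrix polynomial P. -/
theorem D1_D2_relation (a b c : ℝ) (hc : c ≠ 0)
    (P : Matrix (Fin 3) (Fin 3) (Polynomial ℝ)) :
    rightD1 a b c (rightD2 a c P)
      = rightD2 a c (rightD2 a c P)
        + (2 * (c ^ 2 + 2) / c ^ 2 : ℝ) • (rightD1 a b c P - rightD2 a c P) := by
  refine Matrix.ext fun i j => Polynomial.funext fun x => ?_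
  fin_cases i <;> fin_cases j <;>
  · simp only [rightD1, rightD2, F1p, F0p, G2p, G1p, G0p, Matrix.add_apply,
      Matrix.sub_apply, Matrix.smul_apply, Matrix.mul_apply, Matrix.map_apply, Matrix.of_apply,
      Fin.sum_univ_three, Matrix.cons_val', Matrix.cons_val_zero, Matrix.cons_val_one,
      Matrix.head_cons, Matrix.cons_val_two, Matrix.tail_cons, Matrix.empty_val',
      Matrix.cons_val_fin_one, Matrix.head_fin_const,
      Pi.zero_apply, Fin.zero_eta, Fin.mk_one, fin3_mk_two, Fin.isValue,
      derivative_add, derivative_mul, derivative_C, derivative_X, derivative_one,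
      derivative_ofNat, derivative_neg, derivative_zero, derivative_sub,
      eval_add, eval_mul, eval_sub, eval_neg, eval_C, eval_X, eval_one, eval_zero,
      eval_ofNat, eval_smul, smul_eq_mul,
      mul_zero, zero_mul, add_zero, zero_add, mul_one, one_mul]
    field_simp
    ring
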